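/- Let γ be a (p,q)-clan with pairs at positions i < k and j < l interlocking as i < j < k < l with c_i = c_k and c_j = c_l (pattern 1212), and let γ' be the re-pairing with c_i = c_l and c_j = c_k (pattern 1221). Then the only changes in rank numbers are γ'(s;t) = γ(s;t) + 1 for all pairs s < t with i ≤ s < j and k ≤ t < l; in particular γ < γ' in the combinatorial Bruhat order. -/
import Mathlib


open Finset

/-- A `(p,q)`-clan on `n = p+q` positions.  Each position carries either a sign
(`Sum.inl true` = `+`, `Sum.inl false` = `-`) or is matched with another position
(`Sum.inr j` means position `i` is matched with position `j`).  Matching is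
symmetric and irreflexive, and `#+ - #- = p - q`. -/
structure Clan (p q : ℕ) where
  c : Fin (p + q) → Bool ⊕ Fin (p + q)
  mate_ne : ∀ i j, c i = Sum.inr j → i ≠ j
  mate_mate : ∀ i j, c i = Sum.inr j → c j = Sum.inr i
  signs : (Finset.univ.filter fun i => c i = Sum.inl true).card + q
        = (Finset.univ.filter fun i => c i = Sum.inl false).card + p

namespace Clan

variable {p q : ℕ}

/-- `γ(i;+)`: number of `+` signs plus complete pairs among the first `i` positions
(1-indexed; position `a : Fin (p+q)` is among the first `i` iff `a.val < i`). -/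
def rankPlus (γ : Clan p q) (i : ℕ) : ℕ :=
  (Finset.univ.filter fun a : Fin (p + q) => a.val < i ∧ γ.c a = Sum.inl true).card
    + (Finset.univ.filter fun a : Fin (p + q) =>
        a.val < i ∧ ∃ b, γ.c a = Sum.inr b ∧ b < a).card

/-- `γ(i;-)`: number of `-` signs plus complete pairs among the first `i` positions. -/
def rankMinus (γ : Clan p q) (i : ℕ) : ℕ :=
  (Finset.univ.filter fun a : Fin (p + q) => a.val < i ∧ γ.c a = Sum.inl false).card
    + (Finset.univ.filter fun a : Fin (p + q) =>
        a.val < i ∧ ∃ b, γ.c a = Sum.inr b ∧ b < a).card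

/-- `γ(i;j)`: number of pairs `c_s = c_t` with `s ≤ i < j < t` (1-indexed). -/
def rankPair (γ : Clan p q) (i j : ℕ) : ℕ :=
  (Finset.univ.filter fun a : Fin (p + q) =>
    a.val < i ∧ ∃ b, γ.c a = Sum.inr b ∧ j ≤ b.val).card

/-- The combinatorial Bruhat order on `(p,q)`-clans. -/
def le (γ τ : Clan p q) : Prop :=
  (∀ i, τ.rankPlus i ≤ γ.rankPlus i) ∧
  (∀ i, τ.rankMinus i ≤ γ.rankMinus i) ∧
  (∀ i j, i < j → γ.rankPair i j ≤ τ.rankPair i j)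

/-- Strict combinatorial Bruhat order. -/
def lt (γ τ : Clan p q) : Prop := Clan.le γ τ ∧ ¬ Clan.le τ γ

end Clan

/-- the move `1212 → 1221` (crossing pairs `(i,k)`, `(j,l)` with
`i < j < k < l` re-paired as `(i,l)`, `(j,k)`) changes only the rank numbers
`γ(s;t)` for `i ≤ s < j`, `k ≤ t < l` (each increasing by `1`); in particular
`γ < γ'` in the combinatorial Bruhat order. -/
theorem clan_move_1212_1221 {p q : ℕ} (γ γ' : Clan p q) (i j k l : Fin (p + q))
    (hij : i < j) (hjk : j < k) (hkl : k < l)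
    (hi : γ.c i = Sum.inr k) (hk : γ.c k = Sum.inr i)
    (hj : γ.c j = Sum.inr l) (hl : γ.c l = Sum.inr j)
    (hi' : γ'.c i = Sum.inr l) (hl' : γ'.c l = Sum.inr i)
    (hj' : γ'.c j = Sum.inr k) (hk' : γ'.c k = Sum.inr j)
    (hother : ∀ a, a ≠ i → a ≠ j → a ≠ k → a ≠ l → γ'.c a = γ.c a) :
    (∀ s t, i.val < s → s ≤ j.val → k.val < t → t ≤ l.val →
      γ'.rankPair s t = γ.rankPair s t + 1) ∧
    (∀ s, γ'.rankPlus s = γ.rankPlus s) ∧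
    (∀ s, γ'.rankMinus s = γ.rankMinus s) ∧
    (∀ s t, s < t → ¬(i.val < s ∧ s ≤ j.val ∧ k.val < t ∧ t ≤ l.val) →
      γ'.rankPair s t = γ.rankPair s t) ∧
    Clan.lt γ γ' := by
  have hij' : i.val < j.val := hij
  have hjk' : j.val < k.val := hjk
  have hkl' : k.val < l.val := hkl
  have hne_ij : i ≠ j := Fin.ne_of_lt hij
  -- Part 1: the +1 region
  have main : ∀ s t, i.val < s → s ≤ j.val → k.val < t → t ≤ l.val →
      γ'.rankPair s t = γ.rankPair s t + 1 := by
    intro s t h1 h2 h3 h4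
    unfold Clan.rankPair
    rw [Finset.card_filter, Finset.card_filter,
      ← Finset.add_sum_erase _ _ (Finset.mem_univ i),
      ← Finset.add_sum_erase _ _ (Finset.mem_univ i)]
    have hS : ∑ x ∈ univ.erase i, (if x.val < s ∧ ∃ b, γ'.c x = Sum.inr b ∧ t ≤ b.val then 1 else 0)
        = ∑ x ∈ univ.erase i, (if x.val < s ∧ ∃ b, γ.c x = Sum.inr b ∧ t ≤ b.val then 1 else 0) := by
      refine Finset.sum_congr rfl ?_
      intro a ha
      have hai : a ≠ i := (Finset.mem_erase.mp ha).1
      refine if_congr ?_ rfl rfl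
      by_cases haj : a = j
      · subst haj
        have : ¬ a.val < s := by omega
        simp [this]
      by_cases hak : a = k
      · subst hak
        have : ¬ a.val < s := by omega
        simp [this]
      by_cases hal : a = l
      · subst hal
        have : ¬ a.val < s := by omega
        simp [this]
      rw [hother a hai haj hak hal]
    rw [hS]
    have e1 : (if i.val < s ∧ ∃ b, γ'.c i = Sum.inr b ∧ t ≤ b.val then (1:ℕ) else 0) = 1 := by
      simp only [hi', Sum.inr.injEq, exists_eq_left']
      rw [if_pos ⟨h1, h4⟩]
    have e2 : (if i.val < s ∧ ∃ b, γ.c i = Sum.inr b ∧ t ≤ b.val then (1:ℕ) else 0) = 0 := by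
      simp only [hi, Sum.inr.injEq, exists_eq_left']
      rw [if_neg (by omega)]
    rw [e1, e2]
    omega
  -- shared ingredient for Parts 2 and 3: complete-pair counts agree
  have pairs : ∀ s, (Finset.univ.filter fun a : Fin (p + q) =>
        a.val < s ∧ ∃ b, γ'.c a = Sum.inr b ∧ b < a)
      = (Finset.univ.filter fun a : Fin (p + q) =>
        a.val < s ∧ ∃ b, γ.c a = Sum.inr b ∧ b < a) := by
    intro s
    refine Finset.filter_congr ?_
    intro a _
    by_cases hai : a = i
    · subst hai
      simp only [hi, hi', Sum.inr.injEq, exists_eq_left', Fin.lt_def]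
      omega
    by_cases haj : a = j
    · subst haj
      simp only [hj, hj', Sum.inr.injEq, exists_eq_left', Fin.lt_def]
      omega
    by_cases hak : a = k
    · subst hak
      simp only [hk, hk', Sum.inr.injEq, exists_eq_left', Fin.lt_def]
      omega
    by_cases hal : a = l
    · subst hal
      simp only [hl, hl', Sum.inr.injEq, exists_eq_left', Fin.lt_def]
      omega
    rw [hother a hai haj hak hal]
  have signs : ∀ (v : Bool) s, (Finset.univ.filter fun a : Fin (p + q) =>
        a.val < s ∧ γ'.c a = Sum.inl v)
      = (Finset.univ.filter fun a : Fin (p + q) => a.val < s ∧ γ.c a = Sum.inl v) := by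
    intro v s
    refine Finset.filter_congr ?_
    intro a _
    by_cases hai : a = i
    · subst hai; simp [hi, hi']
    by_cases haj : a = j
    · subst haj; simp [hj, hj']
    by_cases hak : a = k
    · subst hak; simp [hk, hk']
    by_cases hal : a = l
    · subst hal; simp [hl, hl']
    rw [hother a hai haj hak hal]
  have plus : ∀ s, γ'.rankPlus s = γ.rankPlus s := by
    intro s; unfold Clan.rankPlus; rw [signs true s, pairs s]
  have minus : ∀ s, γ'.rankMinus s = γ.rankMinus s := by
    intro s; unfold Clan.rankMinus; rw [signs false s, pairs s]
  -- Part 4: equality off the region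
  have off : ∀ s t, s < t → ¬(i.val < s ∧ s ≤ j.val ∧ k.val < t ∧ t ≤ l.val) →
      γ'.rankPair s t = γ.rankPair s t := by
    intro s t hst hreg
    unfold Clan.rankPair
    by_cases hcase : j.val < s
    · -- swap argument
      rw [Finset.card_filter, Finset.card_filter]
      refine Fintype.sum_equiv (Equiv.swap i j) _ _ ?_
      intro a
      refine if_congr ?_ rfl rfl
      by_cases hai : a = i
      · subst hai
        rw [Equiv.swap_apply_left]
        simp only [hi', hj, Sum.inr.injEq, exists_eq_left']
        omega
      by_cases haj : a = j
      · subst haj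
        rw [Equiv.swap_apply_right]
        simp only [hj', hi, Sum.inr.injEq, exists_eq_left']
        omega
      rw [Equiv.swap_apply_of_ne_of_ne hai haj]
      by_cases hak : a = k
      · subst hak
        simp only [hk, hk', Sum.inr.injEq, exists_eq_left']
        omega
      by_cases hal : a = l
      · subst hal
        simp only [hl, hl', Sum.inr.injEq, exists_eq_left']
        omega
      rw [hother a hai haj hak hal]
    · -- here either s ≤ i, or (i < s ≤ j and t outside (k,l]); sets are equal pointwise
      refine congrArg Finset.card (Finset.filter_congr ?_)
      intro a _
      by_cases hai : a = i
      · subst hai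
        simp only [hi, hi', Sum.inr.injEq, exists_eq_left']
        omega
      by_cases haj : a = j
      · subst haj
        simp only [hj, hj', Sum.inr.injEq, exists_eq_left']
        omega
      by_cases hak : a = k
      · subst hak
        simp only [hk, hk', Sum.inr.injEq, exists_eq_left']
        omega
      by_cases hal : a = l
      · subst hal
        simp only [hl, hl', Sum.inr.injEq, exists_eq_left']
        omega
      rw [hother a hai haj hak hal]
  refine ⟨main, plus, minus, off, ⟨⟨fun s => (plus s).le, fun s => (minus s).le, ?_⟩, ?_⟩⟩
  · intro s t hst
    by_cases hreg : i.val < s ∧ s ≤ j.val ∧ k.val < t ∧ t ≤ l.val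
    · rw [main s t hreg.1 hreg.2.1 hreg.2.2.1 hreg.2.2.2]; omega
    · rw [off s t hst hreg]
  · rintro ⟨-, -, h3⟩
    have h := h3 (i.val + 1) (k.val + 1) (by omega)
    have := main (i.val + 1) (k.val + 1) (by omega) (by omega) (by omega) (by omega)
    omega
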